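/- Let g(z) = Σ_{j=1}^t e^{a_j · z + b_j} be an n-variate exponential t-sum with a_j ∈ ℝⁿ, b_j ∈ ℂ, t ≥ 2, and δ(g) := min_{p≠q}|a_p − a_q| > 0 (Euclidean norm). Then for every z ∈ ℂⁿ with g(z) = 0, there exists w ∈ Trop(g) with |Re(z) − w| ≤ log(t−1)/δ(g). -/

import Mathlib

noncomputable section

/-- Complex dot product `a · z = Σ aᵢ zᵢ` of a real frequency with `z ∈ ℂⁿ`. -/
def dotC {n : ℕ} (a : Fin n → ℝ) (z : Fin n → ℂ) : ℂ := ∑ i, (a i : ℂ) * z i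

/-- Real dot product. -/
def dotR {n : ℕ} (a w : Fin n → ℝ) : ℝ := ∑ i, a i * w i

/-- The Archimedean tropical variety of an `n`-variate exponential sum. -/
def TropN (n t : ℕ) (a : Fin t → EuclideanSpace ℝ (Fin n)) (b : Fin t → ℂ) :
    Set (EuclideanSpace ℝ (Fin n)) :=
  {w | ∃ j k : Fin t, j ≠ k ∧
    (∀ i : Fin t, dotR (a i) w + (b i).re ≤ dotR (a j) w + (b j).re) ∧
    dotR (a j) w + (b j).re = dotR (a k) w + (b k).re}

/-- The vector of real parts of `z ∈ ℂⁿ`, as a point of Euclidean space. -/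
def rePart {n : ℕ} (z : Fin n → ℂ) : EuclideanSpace ℝ (Fin n) := WithLp.toLp 2 (fun i => (z i).re)

/-- `dotR` as a real inner product on Euclidean space. -/
lemma dotR_eq_inner {n : ℕ} (v w : EuclideanSpace ℝ (Fin n)) :
    dotR v w = (inner ℝ v w : ℝ) := by
  simp [dotR, PiLp.inner_apply, mul_comm]

/-- every point of `Re(Z(g))` is within distance `log(t-1)/δ(g)`
of some point of `Trop(g)`. -/
theorem re_zero_near_trop (n t : ℕ) (ht : 2 ≤ t)
    (a : Fin t → EuclideanSpace ℝ (Fin n)) (ha : Function.Injective a)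
    (b : Fin t → ℂ) (δ : ℝ) (hδpos : 0 < δ)
    (hδ : IsLeast {d : ℝ | ∃ p q : Fin t, p ≠ q ∧ d = ‖a p - a q‖} δ)
    (z : Fin n → ℂ) (hz : ∑ j, Complex.exp (dotC (a j) z + b j) = 0) :
    ∃ w ∈ TropN n t a b,
      ‖rePart z - w‖
        ≤ Real.log ((t : ℝ) - 1) / δ := by
  classical
  set x : EuclideanSpace ℝ (Fin n) := rePart z with hx
  set f : Fin t → EuclideanSpace ℝ (Fin n) → ℝ :=
    fun i w => dotR (a i) w + (b i).re with hf
  -- choose the argmax `j` over all indices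
  obtain ⟨j, -, hj⟩ := Finset.exists_max_image Finset.univ (fun i => f i x)
    ⟨⟨0, by omega⟩, Finset.mem_univ _⟩
  have hj' : ∀ i, f i x ≤ f j x := fun i => hj i (Finset.mem_univ i)
  -- choose the argmax `k` over the remaining indices
  have hne : (Finset.univ.erase j).Nonempty := by
    rw [← Finset.card_pos, Finset.card_erase_of_mem (Finset.mem_univ j),
      Finset.card_univ, Fintype.card_fin]
    omega
  obtain ⟨k, hk_mem, hk⟩ := Finset.exists_max_image (Finset.univ.erase j)
    (fun i => f i x) hne
  have hjk : k ≠ j := Finset.ne_of_mem_erase hk_mem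
  -- real parts of exponents
  have hre : ∀ i, (dotC (a i) z + b i).re = f i x := by
    intro i
    rw [hf, hx]
    simp [dotC, dotR, rePart, Complex.re_sum]
  -- the dominant term is bounded by the sum of the others
  have h0 : Complex.exp (dotC (a j) z + b j)
      + ∑ i ∈ Finset.univ.erase j, Complex.exp (dotC (a i) z + b i) = 0 := by
    rw [← hz]
    exact Finset.add_sum_erase Finset.univ (fun i => Complex.exp (dotC (a i) z + b i)) (Finset.mem_univ j)
  have habs : Real.exp (f j x) ≤ ∑ i ∈ Finset.univ.erase j, Real.exp (f i x) := by
    have h2 : Complex.exp (dotC (a j) z + b j)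
        = -∑ i ∈ Finset.univ.erase j, Complex.exp (dotC (a i) z + b i) :=
      eq_neg_of_add_eq_zero_left h0
    calc Real.exp (f j x)
        = ‖Complex.exp (dotC (a j) z + b j)‖ := by
          rw [Complex.norm_exp, hre]
      _ = ‖∑ i ∈ Finset.univ.erase j,
            Complex.exp (dotC (a i) z + b i)‖ := by rw [h2, norm_neg]
      _ ≤ ∑ i ∈ Finset.univ.erase j,
            ‖Complex.exp (dotC (a i) z + b i)‖ :=
          norm_sum_le _ _
      _ = ∑ i ∈ Finset.univ.erase j, Real.exp (f i x) := by
          refine Finset.sum_congr rfl fun i _ => ?_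
          rw [Complex.norm_exp, hre]
  have hsum2 : ∑ i ∈ Finset.univ.erase j, Real.exp (f i x)
      ≤ ((t : ℝ) - 1) * Real.exp (f k x) := by
    have h1 := Finset.sum_le_card_nsmul (Finset.univ.erase j)
      (fun i => Real.exp (f i x)) (Real.exp (f k x))
      (fun i hi => Real.exp_le_exp.mpr (hk i hi))
    have hcard : (Finset.univ.erase j).card = t - 1 := by
      rw [Finset.card_erase_of_mem (Finset.mem_univ j), Finset.card_univ,
        Fintype.card_fin]
    rw [hcard, nsmul_eq_mul, Nat.cast_sub (by omega : 1 ≤ t), Nat.cast_one] at h1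
    exact h1
  have ht1 : (1 : ℝ) ≤ (t : ℝ) - 1 := by
    have : (2 : ℝ) ≤ (t : ℝ) := by exact_mod_cast ht
    linarith
  have hlog : 0 ≤ Real.log ((t : ℝ) - 1) := Real.log_nonneg ht1
  have hLlog : f j x - f k x ≤ Real.log ((t : ℝ) - 1) := by
    have hexp : Real.exp (f j x) ≤ ((t : ℝ) - 1) * Real.exp (f k x) :=
      habs.trans hsum2
    rw [← Real.exp_log (by linarith : (0 : ℝ) < (t : ℝ) - 1), ← Real.exp_add]
      at hexp
    have := Real.exp_le_exp.mp hexp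
    linarith
  -- geometry: move in the direction `u = (a k - a j)/D`
  set D : ℝ := ‖a k - a j‖ with hD
  have hDδ : δ ≤ D := hδ.2 ⟨k, j, hjk, rfl⟩
  have hDpos : 0 < D := lt_of_lt_of_le hδpos hDδ
  set u : EuclideanSpace ℝ (Fin n) := D⁻¹ • (a k - a j) with hu
  have hnu : ‖u‖ = 1 := by
    rw [hu, norm_smul, norm_inv, Real.norm_eq_abs, abs_of_pos hDpos, ← hD,
      inv_mul_cancel₀ hDpos.ne']
  set d : Fin t → ℝ := fun i => dotR (a i) u - dotR (a j) u with hd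
  have hdeq : ∀ i, d i = dotR (a i) u - dotR (a j) u := fun _ => rfl
  have hdk : d k = D := by
    rw [hdeq, dotR_eq_inner, dotR_eq_inner, ← inner_sub_left, hu,
      real_inner_smul_right, real_inner_self_eq_norm_sq, ← hD]
    field_simp
  set c : Fin t → ℝ := fun i => f i x - f j x with hc
  have hceq : ∀ i, c i = f i x - f j x := fun _ => rfl
  have hc0 : ∀ i, c i ≤ 0 := fun i => sub_nonpos.mpr (hj' i)
  set T : Finset (Fin t) := Finset.univ.filter (fun i => 0 < d i) with hT
  have hkT : k ∈ T := by
    rw [hT, Finset.mem_filter]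
    exact ⟨Finset.mem_univ _, by rw [hdk]; exact hDpos⟩
  have hTne : T.Nonempty := ⟨k, hkT⟩
  set sfun : Fin t → ℝ := fun i => -c i / d i with hsfun
  have hsfeq : ∀ i, sfun i = -c i / d i := fun _ => rfl
  set s : ℝ := T.inf' hTne sfun with hs
  obtain ⟨i0, hi0T, hi0⟩ := Finset.exists_mem_eq_inf' hTne sfun
  have hd_i0 : 0 < d i0 := (Finset.mem_filter.mp hi0T).2
  have hs_nonneg : 0 ≤ s :=
    Finset.le_inf' hTne _ (fun i hi => by
      rw [hsfeq]
      exact div_nonneg (by linarith [hc0 i]) (le_of_lt (Finset.mem_filter.mp hi).2))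
  have hs_le : s ≤ (f j x - f k x) / D := by
    have h1 : s ≤ sfun k := Finset.inf'_le sfun hkT
    rw [hsfeq, hceq, hdk] at h1
    calc s ≤ -(f k x - f j x) / D := h1
      _ = (f j x - f k x) / D := by ring
  set w : EuclideanSpace ℝ (Fin n) := x + s • u with hw
  have hfw : ∀ i, f i w = f i x + s * dotR (a i) u := by
    intro i
    rw [hf, hw]
    simp only [dotR_eq_inner, inner_add_right, real_inner_smul_right]
    ring
  have hdiff : ∀ i, f i w - f j w = c i + s * d i := by
    intro i
    rw [hfw i, hfw j, hceq, hdeq]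
    ring
  -- `j` attains the maximum at `w`
  have hmax : ∀ i, f i w ≤ f j w := by
    intro i
    have h := hdiff i
    by_cases hdi : 0 < d i
    · have hiT : i ∈ T := by
        rw [hT, Finset.mem_filter]; exact ⟨Finset.mem_univ _, hdi⟩
      have h1 : s ≤ sfun i := Finset.inf'_le sfun hiT
      rw [hsfeq] at h1
      have h2 : s * d i ≤ -c i := by
        calc s * d i ≤ (-c i / d i) * d i := mul_le_mul_of_nonneg_right h1 hdi.le
          _ = -c i := div_mul_cancel₀ _ hdi.ne'
      linarith
    · push_neg at hdi
      nlinarith [hc0 i]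
  -- and so does `i0 ≠ j`
  have heq0 : f i0 w = f j w := by
    have h1 : s = -c i0 / d i0 := by rw [hs, hi0, hsfeq]
    have h2 : s * d i0 = -c i0 := by
      rw [h1, div_mul_cancel₀ _ hd_i0.ne']
    have := hdiff i0
    linarith
  have hi0j : i0 ≠ j := by
    intro hcon
    rw [hcon] at hd_i0
    rw [hdeq] at hd_i0
    linarith
  refine ⟨w, ⟨j, i0, Ne.symm hi0j, hmax, heq0.symm⟩, ?_⟩
  have hxw : ‖x - w‖ = s := by
    have : x - w = -(s • u) := by rw [hw]; abel
    rw [this, norm_neg, norm_smul, hnu, Real.norm_eq_abs,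
      abs_of_nonneg hs_nonneg, mul_one]
  rw [hxw]
  calc s ≤ (f j x - f k x) / D := hs_le
    _ ≤ Real.log ((t : ℝ) - 1) / δ := div_le_div₀ hlog hLlog hδpos hDδ
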